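/- If the nodes are equally spaced, ε_p = ε₀ + p·d with d > 0, ε₀ > 0, and d₀ = ε₀/d, then the Lagrange weights a_p = ∏_{q≠p} ε_q/(ε_q - ε_p) admit the closed form a_p = ((-1)^p / (p!·(ρ-1-p)!·(d₀+p))) · Γ(d₀+ρ)/Γ(d₀) for p = 0,1,…,ρ-1. -/

import Mathlib

open Finset

lemma gamma_prod_aux (x : ℝ) (hx : 0 < x) (n : ℕ) :
    Real.Gamma (x + n) = (∏ q ∈ Finset.range n, (x + q)) * Real.Gamma x := by
  induction n with
  | zero => simp
  | succ n ih =>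
    have h : x + ((n + 1 : ℕ) : ℝ) = (x + n) + 1 := by push_cast; ring
    have hne : x + (n : ℝ) ≠ 0 := by positivity
    rw [h, Real.Gamma_add_one hne, ih, Finset.prod_range_succ]; ring

lemma prod_range_sub_nat (p : ℕ) : ∏ q ∈ Finset.range p, (p - q) = p.factorial := by
  induction p with
  | zero => simp
  | succ p ih =>
    rw [Finset.prod_range_succ']
    simp only [Nat.add_sub_add_right, Nat.sub_zero, ih]
    rw [Nat.factorial_succ]; ring

lemma prod_Ico_sub_nat (ρ p : ℕ) :
    ∏ q ∈ Finset.Ico (p + 1) ρ, (q - p) = (ρ - 1 - p).factorial := by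
  rw [Finset.prod_Ico_eq_prod_range]
  have h1 : ∀ i ∈ Finset.range (ρ - (p + 1)), p + 1 + i - p = i + 1 := by
    intro i _; omega
  rw [Finset.prod_congr rfl h1, Finset.prod_range_add_one_eq_factorial]
  congr 1; omega

lemma denom_prod (ρ p : ℕ) (hp : p < ρ) :
    ∏ q ∈ (Finset.range ρ).erase p, ((q : ℝ) - p) =
      (-1) ^ p * p.factorial * (ρ - 1 - p).factorial := by
  have hset : (Finset.range ρ).erase p = Finset.range p ∪ Finset.Ico (p + 1) ρ := by
    ext q; simp [Finset.mem_erase, Finset.mem_range, Finset.mem_Ico]; omega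
  have hdisj : Disjoint (Finset.range p) (Finset.Ico (p + 1) ρ) := by
    rw [Finset.disjoint_left]; intro a ha hb
    simp [Finset.mem_range] at ha; simp [Finset.mem_Ico] at hb; omega
  rw [hset, Finset.prod_union hdisj]
  have h1 : ∏ q ∈ Finset.range p, ((q : ℝ) - p) = (-1) ^ p * p.factorial := by
    have e : ∀ q ∈ Finset.range p, ((q : ℝ) - p) = (-1) * ((p - q : ℕ) : ℝ) := by
      intro q hq
      rw [Finset.mem_range] at hq
      rw [Nat.cast_sub hq.le]; ring
    rw [Finset.prod_congr rfl e, Finset.prod_mul_distrib, Finset.prod_const,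
      ← Nat.cast_prod, prod_range_sub_nat, Finset.card_range]
  have h2 : ∏ q ∈ Finset.Ico (p + 1) ρ, ((q : ℝ) - p) = ((ρ - 1 - p).factorial : ℝ) := by
    have e : ∀ q ∈ Finset.Ico (p + 1) ρ, ((q : ℝ) - p) = ((q - p : ℕ) : ℝ) := by
      intro q hq
      rw [Finset.mem_Ico] at hq
      rw [Nat.cast_sub (by omega)]
    rw [Finset.prod_congr rfl e, ← Nat.cast_prod, prod_Ico_sub_nat]
  rw [h1, h2]

lemma fin_erase_prod (ρ : ℕ) (p : Fin ρ) (f : ℕ → ℝ) :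
    ∏ q ∈ Finset.univ.erase p, f (q : ℕ) =
      ∏ q ∈ (Finset.range ρ).erase (p : ℕ), f q := by
  refine Finset.prod_bij' (fun q _ => (q : ℕ)) (fun m hm => ⟨m, Finset.mem_range.1 (Finset.mem_of_mem_erase hm)⟩) ?_ ?_ ?_ ?_ ?_
  · intro q hq
    rw [Finset.mem_erase] at hq ⊢
    exact ⟨fun h => hq.1 (Fin.ext h), Finset.mem_range.2 q.isLt⟩
  · intro m hm
    rw [Finset.mem_erase] at hm ⊢
    refine ⟨fun h => hm.1 ?_, Finset.mem_univ _⟩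
    exact congrArg Fin.val h
  · intro a ha; rfl
  · intro a ha; rfl
  · intro a ha; rfl

/-- For equally spaced nodes `ε_p = ε₀ + p d` (`d > 0`, `ε₀ > 0`), with
`d₀ = ε₀ / d`, the Lagrange weights `a_p = ∏_{q≠p} ε_q/(ε_q - ε_p)` have the
closed form `a_p = ((-1)^p / (p! (ρ-1-p)! (d₀+p))) Γ(d₀+ρ)/Γ(d₀)`. -/
theorem lagrange_weights_equally_spaced (ρ : ℕ) (hρ : 0 < ρ)
    (ε : Fin ρ → ℝ) (ε₀ d d₀ : ℝ) (hd : 0 < d) (hε₀ : 0 < ε₀)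
    (hεp : ∀ p : Fin ρ, ε p = ε₀ + (p : ℕ) * d) (hd₀ : d₀ = ε₀ / d) :
    ∀ p : Fin ρ,
      (∏ q ∈ Finset.univ.erase p, ε q / (ε q - ε p)) =
        (-1) ^ (p : ℕ) /
            ((Nat.factorial (p : ℕ) : ℝ) * (Nat.factorial (ρ - 1 - (p : ℕ)) : ℝ) *
              (d₀ + (p : ℕ))) *
          (Real.Gamma (d₀ + ρ) / Real.Gamma d₀) := by
  intro p
  have hd₀pos : 0 < d₀ := by rw [hd₀]; positivity
  have hεd : ε₀ = d₀ * d := by rw [hd₀]; field_simp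
  -- pointwise rewrite
  have hterm : ∀ q ∈ Finset.univ.erase p,
      ε q / (ε q - ε p) = (fun m : ℕ => (d₀ + m) / ((m : ℝ) - (p : ℕ))) (q : ℕ) := by
    intro q hq
    rw [hεp q, hεp p, hεd]
    have h1 : d₀ * d + (q : ℕ) * d - (d₀ * d + (p : ℕ) * d) = (((q : ℕ) : ℝ) - (p : ℕ)) * d := by
      ring
    have h2 : d₀ * d + ((q : ℕ) : ℝ) * d = (d₀ + (q : ℕ)) * d := by ring
    rw [h1, h2, mul_div_mul_right _ _ (ne_of_gt hd)]
  rw [Finset.prod_congr rfl hterm,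
    fin_erase_prod ρ p (fun m => (d₀ + m) / ((m : ℝ) - ((p : ℕ) : ℝ))),
    Finset.prod_div_distrib]
  have hΓ : Real.Gamma d₀ ≠ 0 := (Real.Gamma_pos_of_pos hd₀pos).ne'
  have hdp : (0 : ℝ) < d₀ + (p : ℕ) := by positivity
  have hN : ∏ q ∈ (Finset.range ρ).erase (p : ℕ), (d₀ + q) =
      Real.Gamma (d₀ + ρ) / Real.Gamma d₀ / (d₀ + (p : ℕ)) := by
    have hmem : (p : ℕ) ∈ Finset.range ρ := Finset.mem_range.2 p.isLt
    have h := Finset.mul_prod_erase (Finset.range ρ) (fun q => d₀ + (q : ℝ)) hmem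
    have hall : ∏ q ∈ Finset.range ρ, (d₀ + (q : ℝ)) = Real.Gamma (d₀ + ρ) / Real.Gamma d₀ := by
      rw [gamma_prod_aux d₀ hd₀pos ρ]; field_simp
    rw [hall] at h
    rw [← h, mul_div_cancel_left₀ _ hdp.ne']
  rw [hN, denom_prod ρ (p : ℕ) p.isLt]
  have hfac1 : ((p : ℕ).factorial : ℝ) ≠ 0 := Nat.cast_ne_zero.2 (Nat.factorial_ne_zero _)
  have hfac2 : ((ρ - 1 - (p : ℕ)).factorial : ℝ) ≠ 0 := Nat.cast_ne_zero.2 (Nat.factorial_ne_zero _)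
  have hsq : ((-1 : ℝ)) ^ (p : ℕ) * (-1) ^ (p : ℕ) = 1 := by
    rw [← mul_pow]; norm_num
  have hneg : ((-1 : ℝ)) ^ (p : ℕ) ≠ 0 := pow_ne_zero _ (by norm_num)
  set A := Real.Gamma (d₀ + ρ) / Real.Gamma d₀ with hA
  rw [div_div, div_mul_eq_mul_div,
    div_eq_div_iff
      (mul_ne_zero hdp.ne' (mul_ne_zero (mul_ne_zero hneg hfac1) hfac2))
      (mul_ne_zero (mul_ne_zero hfac1 hfac2) hdp.ne')]
  linear_combination (-A * ((p : ℕ).factorial : ℝ) * ((ρ - 1 - (p : ℕ)).factorial : ℝ) *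
    (d₀ + (p : ℕ))) * hsq
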